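/- arXiv:2602.22988 — 2 statements merged into one kernel-verified Lean document; each statement's English description precedes it below -/
import Mathlib

section
/- Let A be a diagonalizable complex d×d matrix with A = V Λ V⁻¹, where Λ is diagonal with entries λ₁, …, λ_d, and suppose the spectral radius satisfies ρ(A) ≤ 1 + ε_u for some ε_u ≥ 0. Let κ(V) = ‖V‖₂ · ‖V⁻¹‖₂ and let M_{≈1}(A) = (1/d)·#{ j : 1 − ε_n ≤ |λ_j| ≤ 1 + ε_u } for some ε_n ∈ [0,1]. If x is a random vector in ℂ^d with E[x x*] = (1/d)·I, then ((1 − ε_n)² / κ(V)²) · M_{≈1}(A) ≤ E‖Ax‖₂² ≤ κ(V)² · (1 + ε_u)². -/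
open MeasureTheory Matrix

/-- The operator norm of a complex matrix, induced by the Euclidean (`ℓ²`) norm. -/
noncomputable def l2OpNorm {d : ℕ} (A : Matrix (Fin d) (Fin d) ℂ) : ℝ :=
  ‖LinearMap.toContinuousLinearMap (Matrix.toEuclideanLin A)‖

section Aux

open scoped Matrix.Norms.L2Operator

variable {d : ℕ}

lemma l2OpNorm_eq_norm (A : Matrix (Fin d) (Fin d) ℂ) : l2OpNorm A = ‖A‖ := rfl

lemma euclid_norm_sq (v : EuclideanSpace ℂ (Fin d)) : ‖v‖ ^ 2 = ∑ i, ‖v i‖ ^ 2 := by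
  rw [EuclideanSpace.norm_eq, Real.sq_sqrt (by positivity)]

lemma mulVec_sq_sum_le (M : Matrix (Fin d) (Fin d) ℂ) (v : Fin d → ℂ) :
    ∑ i, ‖(M *ᵥ v) i‖ ^ 2 ≤ ‖M‖ ^ 2 * ∑ j, ‖v j‖ ^ 2 := by
  have h : ‖(WithLp.equiv 2 (Fin d → ℂ)).symm (M *ᵥ v)‖
      ≤ ‖M‖ * ‖(WithLp.equiv 2 (Fin d → ℂ)).symm v‖ :=
    M.l2_opNorm_mulVec ((WithLp.equiv 2 (Fin d → ℂ)).symm v)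
  have h2 := pow_le_pow_left₀ (norm_nonneg _) h 2
  rw [mul_pow, euclid_norm_sq, euclid_norm_sq] at h2
  simpa using h2

end Aux
section Aux2
open scoped Matrix.Norms.L2Operator
variable {d : ℕ}

lemma transpose_mulVec_sq_sum_le (M : Matrix (Fin d) (Fin d) ℂ) (v : Fin d → ℂ) :
    ∑ j, ‖(Mᵀ *ᵥ v) j‖ ^ 2 ≤ ‖M‖ ^ 2 * ∑ j, ‖v j‖ ^ 2 := by
  have hconj : ∀ j, (Mᴴ *ᵥ star v) j = star ((Mᵀ *ᵥ v) j) := by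
    intro j
    simp [Matrix.mulVec, dotProduct, Matrix.conjTranspose_apply, star_sum, mul_comm]
  have h := mulVec_sq_sum_le Mᴴ (star v)
  rw [Matrix.l2_opNorm_conjTranspose] at h
  calc ∑ j, ‖(Mᵀ *ᵥ v) j‖ ^ 2 = ∑ j, ‖(Mᴴ *ᵥ star v) j‖ ^ 2 := by
        refine Finset.sum_congr rfl fun j _ => ?_
        rw [hconj j, norm_star]
    _ ≤ ‖M‖ ^ 2 * ∑ j, ‖(star v) j‖ ^ 2 := h
    _ = ‖M‖ ^ 2 * ∑ j, ‖v j‖ ^ 2 := by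
        congr 1; exact Finset.sum_congr rfl fun j _ => by simp

lemma l2OpNorm_diagonal_le (lam : Fin d → ℂ) (c : ℝ) (hc : 0 ≤ c) (h : ∀ j, ‖lam j‖ ≤ c) :
    ‖Matrix.diagonal lam‖ ≤ c := by
  rw [Matrix.l2_opNorm_def]
  refine ContinuousLinearMap.opNorm_le_bound _ hc fun y => ?_
  show ‖Matrix.toEuclideanLin (Matrix.diagonal lam) y‖ ≤ c * ‖y‖
  refine le_of_pow_le_pow_left₀ two_ne_zero (by positivity) ?_
  rw [mul_pow, euclid_norm_sq, euclid_norm_sq]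
  calc ∑ i, ‖Matrix.toEuclideanLin (Matrix.diagonal lam) y i‖ ^ 2
      = ∑ i, ‖lam i‖ ^ 2 * ‖y i‖ ^ 2 := by
        refine Finset.sum_congr rfl fun i _ => ?_
        have : Matrix.toEuclideanLin (Matrix.diagonal lam) y i = lam i * y i := by
          show (Matrix.diagonal lam *ᵥ _) i = _
          rw [Matrix.mulVec_diagonal]
          rfl
        rw [this, norm_mul, mul_pow]
    _ ≤ ∑ i, c ^ 2 * ‖y i‖ ^ 2 := by
        refine Finset.sum_le_sum fun i _ => ?_
        exact mul_le_mul_of_nonneg_right (pow_le_pow_left₀ (norm_nonneg _) (h i) 2) (by positivity)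
    _ = c ^ 2 * ∑ i, ‖y i‖ ^ 2 := by rw [Finset.mul_sum]

lemma frob_le_dim_mul_opNorm_sq (M : Matrix (Fin d) (Fin d) ℂ) :
    ∑ i, ∑ j, ‖M i j‖ ^ 2 ≤ d * ‖M‖ ^ 2 := by
  rw [Finset.sum_comm]
  have hj : ∀ j : Fin d, ∑ i, ‖M i j‖ ^ 2 ≤ ‖M‖ ^ 2 := by
    intro j
    have h := mulVec_sq_sum_le M (Pi.single j 1)
    have hs : ∑ k, ‖(Pi.single j 1 : Fin d → ℂ) k‖ ^ 2 = 1 := by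
      have : ∀ k, ‖(Pi.single j 1 : Fin d → ℂ) k‖ ^ 2 = if k = j then 1 else 0 := by
        intro k
        by_cases hk : k = j <;> simp [Pi.single_apply, hk]
      rw [Finset.sum_congr rfl fun k _ => this k]
      simp
    rw [hs, mul_one] at h
    calc ∑ i, ‖M i j‖ ^ 2 = ∑ i, ‖(M *ᵥ Pi.single j 1) i‖ ^ 2 := by
          refine Finset.sum_congr rfl fun i _ => ?_
          rw [Matrix.mulVec_single]
          simp
      _ ≤ _ := h
  calc ∑ j, ∑ i, ‖M i j‖ ^ 2 ≤ ∑ _j : Fin d, ‖M‖ ^ 2 := Finset.sum_le_sum fun j _ => hj j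
    _ = d * ‖M‖ ^ 2 := by simp [Finset.sum_const, nsmul_eq_mul]

lemma frob_mul_left_le (M N : Matrix (Fin d) (Fin d) ℂ) :
    ∑ i, ∑ j, ‖(M * N) i j‖ ^ 2 ≤ ‖M‖ ^ 2 * ∑ i, ∑ j, ‖N i j‖ ^ 2 := by
  rw [Finset.sum_comm, Finset.sum_comm (γ := Fin d) (f := fun i j => ‖N i j‖ ^ 2)]
  calc ∑ j, ∑ i, ‖(M * N) i j‖ ^ 2
      = ∑ j : Fin d, ∑ i, ‖(M *ᵥ fun k => N k j) i‖ ^ 2 := by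
        refine Finset.sum_congr rfl fun j _ => Finset.sum_congr rfl fun i _ => ?_
        rfl
    _ ≤ ∑ j : Fin d, ‖M‖ ^ 2 * ∑ k, ‖N k j‖ ^ 2 :=
        Finset.sum_le_sum fun j _ => mulVec_sq_sum_le M _
    _ = ‖M‖ ^ 2 * ∑ j, ∑ k, ‖N k j‖ ^ 2 := by rw [Finset.mul_sum]

lemma frob_mul_right_le (M N : Matrix (Fin d) (Fin d) ℂ) :
    ∑ i, ∑ j, ‖(M * N) i j‖ ^ 2 ≤ (∑ i, ∑ j, ‖M i j‖ ^ 2) * ‖N‖ ^ 2 := by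
  calc ∑ i, ∑ j, ‖(M * N) i j‖ ^ 2
      = ∑ i, ∑ j, ‖(Nᵀ *ᵥ fun k => M i k) j‖ ^ 2 := by
        refine Finset.sum_congr rfl fun i _ => Finset.sum_congr rfl fun j _ => ?_
        congr 1
        simp [Matrix.mul_apply, Matrix.mulVec, dotProduct, mul_comm]
    _ ≤ ∑ i, ‖N‖ ^ 2 * ∑ k, ‖M i k‖ ^ 2 :=
        Finset.sum_le_sum fun i _ => transpose_mulVec_sq_sum_le N _
    _ = (∑ i, ∑ j, ‖M i j‖ ^ 2) * ‖N‖ ^ 2 := by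
        rw [← Finset.mul_sum, mul_comm]

lemma norm_one_matrix (hd : 0 < d) : ‖(1 : Matrix (Fin d) (Fin d) ℂ)‖ = 1 := by
  have : Nonempty (Fin d) := ⟨⟨0, hd⟩⟩
  rw [Matrix.cstar_norm_def, _root_.map_one]
  exact ContinuousLinearMap.norm_id

end Aux2
section Integral
open ComplexConjugate
variable {d : ℕ} {Ω : Type*} [MeasurableSpace Ω]

lemma expectation_mulVec_sq (μ : Measure Ω) [IsProbabilityMeasure μ]
    (x : Ω → Fin d → ℂ)
    (hInt : ∀ i j, Integrable (fun ω => x ω i * (starRingEnd ℂ) (x ω j)) μ)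
    (hIso : ∀ i j, ∫ ω, x ω i * (starRingEnd ℂ) (x ω j) ∂μ
      = if i = j then (1 / d : ℂ) else 0)
    (A : Matrix (Fin d) (Fin d) ℂ) :
    ∫ ω, ∑ i, ‖A.mulVec (x ω) i‖ ^ 2 ∂μ = (∑ i, ∑ j, ‖A i j‖ ^ 2) / d := by
  classical
  set c : Fin d → Fin d → ℂ := fun j k => ∑ i, A i j * conj (A i k) with hc
  have key : ∀ v : Fin d → ℂ, (∑ i, ‖A.mulVec v i‖ ^ 2)
      = (∑ j, ∑ k, c j k * (v j * conj (v k))).re := by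
    intro v
    have h2 : ∑ i, A.mulVec v i * conj (A.mulVec v i)
        = ∑ j, ∑ k, c j k * (v j * conj (v k)) := by
      simp only [hc, Matrix.mulVec, dotProduct, map_sum, _root_.map_mul,
        Finset.sum_mul_sum, Finset.sum_mul]
      rw [Finset.sum_comm]
      refine Finset.sum_congr rfl fun j _ => ?_
      rw [Finset.sum_comm]
      refine Finset.sum_congr rfl fun k _ => ?_
      rw [Finset.mul_sum]
      exact Finset.sum_congr rfl fun i _ => by ring
    rw [← h2, Complex.re_sum]
    refine Finset.sum_congr rfl fun i _ => ?_
    rw [Complex.mul_conj, Complex.ofReal_re, Complex.normSq_eq_norm_sq]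
  have hgint : Integrable (fun ω => ∑ j, ∑ k, c j k * (x ω j * conj (x ω k))) μ :=
    integrable_finset_sum _ fun j _ =>
      integrable_finset_sum _ fun k _ => (hInt j k).const_mul _
  have h4 : (∫ ω, ∑ i, ‖A.mulVec (x ω) i‖ ^ 2 ∂μ)
      = (∫ ω, ∑ j, ∑ k, c j k * (x ω j * conj (x ω k)) ∂μ).re := by
    rw [show (fun ω => ∑ i, ‖A.mulVec (x ω) i‖ ^ 2)
        = fun ω => (∑ j, ∑ k, c j k * (x ω j * conj (x ω k))).re from
      funext fun ω => key (x ω)]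
    have := integral_re (μ := μ) (f := fun ω => ∑ j, ∑ k, c j k * (x ω j * conj (x ω k))) hgint
    simpa using this
  have h5 : ∫ ω, ∑ j, ∑ k, c j k * (x ω j * conj (x ω k)) ∂μ
      = (((∑ i, ∑ j, ‖A i j‖ ^ 2) / d : ℝ) : ℂ) := by
    rw [integral_finset_sum _ fun j _ =>
      integrable_finset_sum _ fun k _ => (hInt j k).const_mul _]
    have h6 : ∀ j, ∫ ω, ∑ k, c j k * (x ω j * conj (x ω k)) ∂μ = c j j * (1 / d) := by
      intro j
      rw [integral_finset_sum _ fun k _ => (hInt j k).const_mul _]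
      have h7 : ∀ k, ∫ ω, c j k * (x ω j * conj (x ω k)) ∂μ
          = if j = k then c j k * (1 / d) else 0 := by
        intro k
        rw [integral_const_mul, hIso j k]
        split <;> simp
      rw [Finset.sum_congr rfl fun k _ => h7 k, Finset.sum_ite_eq]
      simp
    rw [Finset.sum_congr rfl fun j _ => h6 j]
    have h8 : ∀ j, c j j = ((∑ i, ‖A i j‖ ^ 2 : ℝ) : ℂ) := by
      intro j
      rw [hc]
      push_cast
      refine Finset.sum_congr rfl fun i _ => ?_
      rw [Complex.mul_conj, Complex.normSq_eq_norm_sq]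
      push_cast
      ring
    rw [Finset.sum_congr rfl fun j _ => by rw [h8 j]]
    rw [Finset.sum_comm]
    push_cast
    rw [Finset.sum_div]
    refine Finset.sum_congr rfl fun j _ => by ring
  rw [h4, h5, Complex.ofReal_re]

end Integral
section Wrappers
open scoped Matrix.Norms.L2Operator
variable {d : ℕ}

lemma l2OpNorm_nonneg (M : Matrix (Fin d) (Fin d) ℂ) : 0 ≤ l2OpNorm M := norm_nonneg M

lemma l2OpNorm_mul_le (M N : Matrix (Fin d) (Fin d) ℂ) :
    l2OpNorm (M * N) ≤ l2OpNorm M * l2OpNorm N := Matrix.l2_opNorm_mul M N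

lemma l2OpNorm_diagonal_le' (lam : Fin d → ℂ) (c : ℝ) (hc : 0 ≤ c) (h : ∀ j, ‖lam j‖ ≤ c) :
    l2OpNorm (Matrix.diagonal lam) ≤ c := l2OpNorm_diagonal_le lam c hc h

lemma frob_le_dim_mul_l2OpNorm_sq (M : Matrix (Fin d) (Fin d) ℂ) :
    ∑ i, ∑ j, ‖M i j‖ ^ 2 ≤ d * l2OpNorm M ^ 2 := frob_le_dim_mul_opNorm_sq M

lemma frob_mul_left_le' (M N : Matrix (Fin d) (Fin d) ℂ) :
    ∑ i, ∑ j, ‖(M * N) i j‖ ^ 2 ≤ l2OpNorm M ^ 2 * ∑ i, ∑ j, ‖N i j‖ ^ 2 :=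
  frob_mul_left_le M N

lemma frob_mul_right_le' (M N : Matrix (Fin d) (Fin d) ℂ) :
    ∑ i, ∑ j, ‖(M * N) i j‖ ^ 2 ≤ (∑ i, ∑ j, ‖M i j‖ ^ 2) * l2OpNorm N ^ 2 :=
  frob_mul_right_le M N

lemma one_le_l2OpNorm_mul_inv (hd : 0 < d) (V : Matrix (Fin d) (Fin d) ℂ)
    (hV : IsUnit V.det) : 1 ≤ l2OpNorm V * l2OpNorm V⁻¹ := by
  calc (1:ℝ) = ‖(1 : Matrix (Fin d) (Fin d) ℂ)‖ := (norm_one_matrix hd).symm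
    _ = ‖V * V⁻¹‖ := by rw [Matrix.mul_nonsing_inv V hV]
    _ ≤ l2OpNorm V * l2OpNorm V⁻¹ := Matrix.l2_opNorm_mul V V⁻¹

end Wrappers

/-- Let `A = V Λ V⁻¹` be a diagonalizable complex `d × d` matrix with
`Λ = diagonal λ`, spectral radius `ρ(A) ≤ 1 + ε_u` (i.e. `|λⱼ| ≤ 1 + ε_u` for all `j`),
`κ(V) = ‖V‖₂·‖V⁻¹‖₂`, near-unit mass
`M_{≈1}(A) = (1/d)·#{j : 1 - ε_n ≤ |λⱼ| ≤ 1 + ε_u}` with `ε_n ∈ [0,1]`. If `x` is a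
random vector in `ℂ^d` with `E[x x*] = (1/d)·I`, then
`((1 - ε_n)²/κ(V)²)·M_{≈1}(A) ≤ E‖Ax‖₂² ≤ κ(V)²·(1 + ε_u)²`. -/
theorem near_unit_energy_preservation_diagonalizable
    {d : ℕ} (hd : 0 < d) {Ω : Type*} [MeasurableSpace Ω]
    (μ : Measure Ω) [IsProbabilityMeasure μ]
    (x : Ω → Fin d → ℂ)
    (hInt : ∀ i j, Integrable (fun ω => x ω i * (starRingEnd ℂ) (x ω j)) μ)
    (hIso : ∀ i j, ∫ ω, x ω i * (starRingEnd ℂ) (x ω j) ∂μ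
      = if i = j then (1 / d : ℂ) else 0)
    (A V : Matrix (Fin d) (Fin d) ℂ) (lam : Fin d → ℂ)
    (hV : IsUnit V.det)
    (hA : A = V * Matrix.diagonal lam * V⁻¹)
    (εu εn : ℝ) (hεu : 0 ≤ εu) (hεn : 0 ≤ εn) (hεn1 : εn ≤ 1)
    (hρ : ∀ j, ‖lam j‖ ≤ 1 + εu) :
    ((1 - εn) ^ 2 / (l2OpNorm V * l2OpNorm V⁻¹) ^ 2) *
        ((Finset.univ.filter fun j => 1 - εn ≤ ‖lam j‖ ∧ ‖lam j‖ ≤ 1 + εu).card / d : ℝ)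
      ≤ ∫ ω, ∑ i, ‖A.mulVec (x ω) i‖ ^ 2 ∂μ
    ∧ ∫ ω, ∑ i, ‖A.mulVec (x ω) i‖ ^ 2 ∂μ
      ≤ (l2OpNorm V * l2OpNorm V⁻¹) ^ 2 * (1 + εu) ^ 2 := by
  classical
  rw [expectation_mulVec_sq μ x hInt hIso A]
  set F : ℝ := ∑ i, ∑ j, ‖A i j‖ ^ 2 with hF
  set κ : ℝ := l2OpNorm V * l2OpNorm V⁻¹ with hκ
  have hdpos : (0:ℝ) < d := Nat.cast_pos.mpr hd
  have hκ1 : (1:ℝ) ≤ κ := one_le_l2OpNorm_mul_inv hd V hV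
  have hκ0 : (0:ℝ) < κ := lt_of_lt_of_le one_pos hκ1
  have hFnn : 0 ≤ F := by positivity
  constructor
  · -- lower bound
    have hΛ : Matrix.diagonal lam = V⁻¹ * (A * V) := by
      rw [hA, Matrix.mul_assoc (V * Matrix.diagonal lam) V⁻¹ V,
        Matrix.nonsing_inv_mul V hV, Matrix.mul_one, ← Matrix.mul_assoc,
        Matrix.nonsing_inv_mul V hV, Matrix.one_mul]
    have hcard : (1 - εn) ^ 2 *
        ((Finset.univ.filter fun j => 1 - εn ≤ ‖lam j‖ ∧ ‖lam j‖ ≤ 1 + εu).card : ℝ)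
        ≤ ∑ j, ‖lam j‖ ^ 2 := by
      calc (1 - εn) ^ 2 *
          ((Finset.univ.filter fun j => 1 - εn ≤ ‖lam j‖ ∧ ‖lam j‖ ≤ 1 + εu).card : ℝ)
          = ∑ _j ∈ (Finset.univ.filter fun j => 1 - εn ≤ ‖lam j‖ ∧ ‖lam j‖ ≤ 1 + εu),
              (1 - εn) ^ 2 := by rw [Finset.sum_const, nsmul_eq_mul, mul_comm]
        _ ≤ ∑ j ∈ (Finset.univ.filter fun j => 1 - εn ≤ ‖lam j‖ ∧ ‖lam j‖ ≤ 1 + εu),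
              ‖lam j‖ ^ 2 := by
            refine Finset.sum_le_sum fun j hj => ?_
            have h := (Finset.mem_filter.mp hj).2.1
            exact pow_le_pow_left₀ (by linarith) h 2
        _ ≤ ∑ j, ‖lam j‖ ^ 2 :=
            Finset.sum_le_sum_of_subset_of_nonneg (Finset.subset_univ _)
              (fun j _ _ => by positivity)
    have hdiagF : ∑ i, ∑ j, ‖Matrix.diagonal lam i j‖ ^ 2 = ∑ j, ‖lam j‖ ^ 2 := by
      refine Finset.sum_congr rfl fun i _ => ?_
      have h : ∀ j, ‖Matrix.diagonal lam i j‖ ^ 2 = if i = j then ‖lam i‖ ^ 2 else 0 := by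
        intro j
        by_cases hij : i = j <;> simp [Matrix.diagonal_apply, hij]
      rw [Finset.sum_congr rfl fun j _ => h j, Finset.sum_ite_eq]
      simp
    have hchain : ∑ j, ‖lam j‖ ^ 2 ≤ l2OpNorm V⁻¹ ^ 2 * (F * l2OpNorm V ^ 2) := by
      rw [← hdiagF, hΛ]
      calc ∑ i, ∑ j, ‖(V⁻¹ * (A * V)) i j‖ ^ 2
          ≤ l2OpNorm V⁻¹ ^ 2 * ∑ i, ∑ j, ‖(A * V) i j‖ ^ 2 := frob_mul_left_le' _ _
        _ ≤ l2OpNorm V⁻¹ ^ 2 * (F * l2OpNorm V ^ 2) := by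
            refine mul_le_mul_of_nonneg_left (frob_mul_right_le' A V) ?_
            have := l2OpNorm_nonneg V⁻¹
            positivity
    have hmain : (1 - εn) ^ 2 *
        ((Finset.univ.filter fun j => 1 - εn ≤ ‖lam j‖ ∧ ‖lam j‖ ≤ 1 + εu).card : ℝ)
        ≤ κ ^ 2 * F := by
      refine le_trans hcard (le_trans hchain ?_)
      rw [hκ]
      ring_nf
      nlinarith [l2OpNorm_nonneg V, l2OpNorm_nonneg V⁻¹, hFnn]
    rw [div_mul_div_comm, div_le_div_iff₀ (by positivity) hdpos]
    calc (1 - εn) ^ 2 *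
        ((Finset.univ.filter fun j => 1 - εn ≤ ‖lam j‖ ∧ ‖lam j‖ ≤ 1 + εu).card : ℝ) * d
        ≤ κ ^ 2 * F * d := mul_le_mul_of_nonneg_right hmain hdpos.le
      _ = F * (κ ^ 2 * d) := by ring
  · -- upper bound
    have hdiag : l2OpNorm (Matrix.diagonal lam) ≤ 1 + εu :=
      l2OpNorm_diagonal_le' lam _ (by linarith) hρ
    have h1 : l2OpNorm A ≤ l2OpNorm (V * Matrix.diagonal lam) * l2OpNorm V⁻¹ := by
      rw [hA]; exact l2OpNorm_mul_le _ _
    have h2 : l2OpNorm (V * Matrix.diagonal lam) ≤ l2OpNorm V * (1 + εu) :=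
      le_trans (l2OpNorm_mul_le _ _)
        (mul_le_mul_of_nonneg_left hdiag (l2OpNorm_nonneg V))
    have hAn : l2OpNorm A ≤ l2OpNorm V * (1 + εu) * l2OpNorm V⁻¹ :=
      le_trans h1 (mul_le_mul_of_nonneg_right h2 (l2OpNorm_nonneg V⁻¹))
    have hA2 : l2OpNorm A ^ 2 ≤ (l2OpNorm V * (1 + εu) * l2OpNorm V⁻¹) ^ 2 :=
      pow_le_pow_left₀ (l2OpNorm_nonneg A) hAn 2
    rw [div_le_iff₀ hdpos]
    calc F ≤ d * l2OpNorm A ^ 2 := frob_le_dim_mul_l2OpNorm_sq A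
      _ ≤ d * (l2OpNorm V * (1 + εu) * l2OpNorm V⁻¹) ^ 2 :=
          mul_le_mul_of_nonneg_left hA2 hdpos.le
      _ = κ ^ 2 * (1 + εu) ^ 2 * d := by rw [hκ]; ring
end

section
/- Let A and Â be real symmetric positive definite d×d matrices with smallest eigenvalue of A at least σ > 0, and suppose ‖Â − A‖₂ ≤ σ/2. Then ‖Â^{-1/2} − A^{-1/2}‖₂ ≤ (2/σ^{3/2}) · ‖Â − A‖₂. -/
set_option maxHeartbeats 1000000

open Matrix
open scoped Matrix.Norms.L2Operator RealInnerProductSpace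

/-- The operator norm of a real matrix, induced by the Euclidean (`ℓ²`) norm. -/
noncomputable def l2OpNormR {d : ℕ} (A : Matrix (Fin d) (Fin d) ℝ) : ℝ :=
  ‖LinearMap.toContinuousLinearMap (Matrix.toEuclideanLin A)‖

/-- The square root of a positive semidefinite matrix, as `Matrix.PosSemidef.sqrt` was defined
in older Mathlib (it has since been removed). -/
noncomputable def Matrix.PosSemidef.sqrt {n 𝕜 : Type*} [Fintype n] [DecidableEq n] [RCLike 𝕜]
    [PartialOrder 𝕜] {A : Matrix n n 𝕜} (hA : A.PosSemidef) : Matrix n n 𝕜 :=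
  hA.1.eigenvectorUnitary.1 * diagonal ((↑) ∘ (√·) ∘ hA.1.eigenvalues) *
  (star hA.1.eigenvectorUnitary : Matrix n n 𝕜)

lemma Matrix.PosSemidef.posSemidef_sqrt {d : ℕ} {M : Matrix (Fin d) (Fin d) ℝ}
    (hM : M.PosSemidef) : hM.sqrt.PosSemidef := by
  unfold Matrix.PosSemidef.sqrt
  have h := (posSemidef_diagonal_iff (d := (RCLike.ofReal ∘ (√·) ∘ hM.1.eigenvalues : Fin d → ℝ))).2
    (fun i => by simp [RCLike.ofReal_real_eq_id, Real.sqrt_nonneg])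
  have := h.mul_mul_conjTranspose_same (hM.1.eigenvectorUnitary : Matrix (Fin d) (Fin d) ℝ)
  rw [Matrix.star_eq_conjTranspose]; exact this

lemma Matrix.PosSemidef.sqrt_mul_self {d : ℕ} {M : Matrix (Fin d) (Fin d) ℝ}
    (hM : M.PosSemidef) : hM.sqrt * hM.sqrt = M := by
  unfold Matrix.PosSemidef.sqrt
  conv_rhs => rw [hM.1.spectral_theorem, Unitary.conjStarAlgAut_apply]
  have hU : (star hM.1.eigenvectorUnitary : Matrix (Fin d) (Fin d) ℝ) *
      (hM.1.eigenvectorUnitary : Matrix (Fin d) (Fin d) ℝ) = 1 := Unitary.coe_star_mul_self _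
  have hD : diagonal (RCLike.ofReal ∘ (√·) ∘ hM.1.eigenvalues : Fin d → ℝ) *
      diagonal (RCLike.ofReal ∘ (√·) ∘ hM.1.eigenvalues) = diagonal (RCLike.ofReal ∘ hM.1.eigenvalues) := by
    rw [diagonal_mul_diagonal]; congr 1; funext i
    simp [Real.mul_self_sqrt (hM.eigenvalues_nonneg i)]
  calc _ = (hM.1.eigenvectorUnitary : Matrix (Fin d) (Fin d) ℝ) *
        (diagonal (RCLike.ofReal ∘ (√·) ∘ hM.1.eigenvalues) *
        ((star hM.1.eigenvectorUnitary : Matrix (Fin d) (Fin d) ℝ) *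
        (hM.1.eigenvectorUnitary : Matrix (Fin d) (Fin d) ℝ)) *
        diagonal (RCLike.ofReal ∘ (√·) ∘ hM.1.eigenvalues)) *
        (star hM.1.eigenvectorUnitary : Matrix (Fin d) (Fin d) ℝ) := by
          simp only [Matrix.mul_assoc]
    _ = _ := by rw [hU, Matrix.mul_one, hD]

namespace ISPB

variable {d : ℕ}

noncomputable def f (M : Matrix (Fin d) (Fin d) ℝ) :
    EuclideanSpace ℝ (Fin d) →L[ℝ] EuclideanSpace ℝ (Fin d) :=
  toEuclideanCLM (𝕜 := ℝ) M

lemma l2_eq (M : Matrix (Fin d) (Fin d) ℝ) : l2OpNormR M = ‖M‖ := rfl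

lemma norm_f (M : Matrix (Fin d) (Fin d) ℝ) : ‖M‖ = ‖f M‖ := rfl

lemma f_mul (M N : Matrix (Fin d) (Fin d) ℝ) (x : EuclideanSpace ℝ (Fin d)) :
    f (M * N) x = f M (f N x) := by
  simp only [f, _root_.map_mul]; rfl

lemma f_sym {M : Matrix (Fin d) (Fin d) ℝ} (hM : M.IsHermitian)
    (x y : EuclideanSpace ℝ (Fin d)) : ⟪f M x, y⟫ = ⟪x, f M y⟫ :=
  (isHermitian_iff_isSymmetric.1 hM) x y

lemma f_eigen {M : Matrix (Fin d) (Fin d) ℝ} (hM : M.IsHermitian) (j : Fin d) :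
    f M (hM.eigenvectorBasis j) = hM.eigenvalues j • hM.eigenvectorBasis j := by
  have h := hM.mulVec_eigenvectorBasis j
  apply PiLp.ext
  intro k
  have := congrFun h k
  simpa [f] using this

lemma repr_f {M : Matrix (Fin d) (Fin d) ℝ} (hM : M.IsHermitian)
    (x : EuclideanSpace ℝ (Fin d)) (i : Fin d) :
    hM.eigenvectorBasis.repr (f M x) i = hM.eigenvalues i * hM.eigenvectorBasis.repr x i := by
  rw [hM.eigenvectorBasis.repr_apply_apply, hM.eigenvectorBasis.repr_apply_apply,
    ← f_sym hM, f_eigen hM, real_inner_smul_left]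

lemma inner_repr (x y : EuclideanSpace ℝ (Fin d))
    (b : OrthonormalBasis (Fin d) ℝ (EuclideanSpace ℝ (Fin d))) :
    ⟪x, y⟫ = ∑ i, b.repr x i * b.repr y i := by
  rw [← b.repr.inner_map_map x y, PiLp.inner_apply]
  simp only [RCLike.inner_apply, starRingEnd_apply, star_trivial, mul_comm]

lemma norm_sq_repr (x : EuclideanSpace ℝ (Fin d))
    (b : OrthonormalBasis (Fin d) ℝ (EuclideanSpace ℝ (Fin d))) :
    ‖x‖ ^ 2 = ∑ i, (b.repr x i) ^ 2 := by
  rw [← real_inner_self_eq_norm_sq, inner_repr x x b]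
  simp [sq]

lemma quadform_lower {M : Matrix (Fin d) (Fin d) ℝ} (hM : M.IsHermitian) (c : ℝ)
    (h : ∀ i, c ≤ hM.eigenvalues i) (x : EuclideanSpace ℝ (Fin d)) :
    c * ‖x‖ ^ 2 ≤ ⟪x, f M x⟫ := by
  rw [inner_repr x (f M x) hM.eigenvectorBasis, norm_sq_repr x hM.eigenvectorBasis,
    Finset.mul_sum]
  refine Finset.sum_le_sum fun i _ => ?_
  rw [repr_f hM]
  have := sq_nonneg (hM.eigenvectorBasis.repr x i)
  nlinarith [h i]

lemma eig_eq_inner {M : Matrix (Fin d) (Fin d) ℝ} (hM : M.IsHermitian) (i : Fin d) :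
    ⟪hM.eigenvectorBasis i, f M (hM.eigenvectorBasis i)⟫ = hM.eigenvalues i := by
  rw [f_eigen hM, real_inner_smul_right, real_inner_self_eq_norm_sq,
    hM.eigenvectorBasis.orthonormal.1 i]
  simp

lemma eig_lower_of_quadform {M : Matrix (Fin d) (Fin d) ℝ} (hM : M.IsHermitian) (c : ℝ)
    (h : ∀ x : EuclideanSpace ℝ (Fin d), c * ‖x‖ ^ 2 ≤ ⟪x, f M x⟫) (i : Fin d) :
    c ≤ hM.eigenvalues i := by
  have := h (hM.eigenvectorBasis i)
  rwa [eig_eq_inner hM, hM.eigenvectorBasis.orthonormal.1 i, one_pow, mul_one] at this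

lemma norm_le_of_eig {M : Matrix (Fin d) (Fin d) ℝ} (hM : M.IsHermitian) (c : ℝ)
    (hc : 0 ≤ c) (h : ∀ i, |hM.eigenvalues i| ≤ c) : ‖M‖ ≤ c := by
  rw [norm_f]
  refine ContinuousLinearMap.opNorm_le_bound _ hc fun x => ?_
  have h2 : ‖f M x‖ ^ 2 ≤ (c * ‖x‖) ^ 2 := by
    rw [norm_sq_repr (f M x) hM.eigenvectorBasis, mul_pow,
      norm_sq_repr x hM.eigenvectorBasis, Finset.mul_sum]
    refine Finset.sum_le_sum fun i _ => ?_
    rw [repr_f hM, mul_pow]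
    have h1 : (hM.eigenvalues i) ^ 2 ≤ c ^ 2 := by
      have := h i; nlinarith [abs_nonneg (hM.eigenvalues i), sq_abs (hM.eigenvalues i)]
    nlinarith [sq_nonneg (hM.eigenvectorBasis.repr x i)]
  nlinarith [norm_nonneg (f M x), mul_nonneg hc (norm_nonneg x)]


lemma f_add (M N : Matrix (Fin d) (Fin d) ℝ) (x : EuclideanSpace ℝ (Fin d)) :
    f (M + N) x = f M x + f N x := by
  simp only [f, _root_.map_add]; rfl

lemma inner_f_le (M : Matrix (Fin d) (Fin d) ℝ) (x y : EuclideanSpace ℝ (Fin d)) :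
    |⟪x, f M y⟫| ≤ ‖M‖ * ‖x‖ * ‖y‖ := by
  have h1 := abs_real_inner_le_norm x (f M y)
  have h2 := (f M).le_opNorm y
  rw [norm_f M]
  nlinarith [norm_nonneg x, norm_nonneg (f M y), norm_nonneg y,
    (f M).opNorm_nonneg]

lemma sqrt_quadform {M : Matrix (Fin d) (Fin d) ℝ} (hM : M.PosSemidef) (c : ℝ)
    (hc : 0 ≤ c) (h : ∀ x : EuclideanSpace ℝ (Fin d), c * ‖x‖ ^ 2 ≤ ⟪x, f M x⟫)
    (x : EuclideanSpace ℝ (Fin d)) :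
    Real.sqrt c * ‖x‖ ^ 2 ≤ ⟪x, f hM.sqrt x⟫ := by
  refine quadform_lower hM.posSemidef_sqrt.1 _ (fun i => ?_) x
  have hlam : 0 ≤ hM.posSemidef_sqrt.1.eigenvalues i := hM.posSemidef_sqrt.eigenvalues_nonneg i
  set b := hM.posSemidef_sqrt.1.eigenvectorBasis with hb
  have hbn : ‖b i‖ = 1 := hM.posSemidef_sqrt.1.eigenvectorBasis.orthonormal.1 i
  have e1 : ⟪b i, f M (b i)⟫ = (hM.posSemidef_sqrt.1.eigenvalues i) ^ 2 := by
    conv_lhs => rw [← hM.sqrt_mul_self]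
    rw [f_mul, f_eigen hM.posSemidef_sqrt.1, _root_.map_smul, real_inner_smul_right,
      f_eigen hM.posSemidef_sqrt.1, real_inner_smul_right, real_inner_self_eq_norm_sq, hbn]
    ring
  have key : c ≤ (hM.posSemidef_sqrt.1.eigenvalues i) ^ 2 := by
    have h1 := h (b i)
    rw [e1, hbn, one_pow, mul_one] at h1
    exact h1
  calc Real.sqrt c ≤ Real.sqrt ((hM.posSemidef_sqrt.1.eigenvalues i) ^ 2) :=
        Real.sqrt_le_sqrt key
    _ = hM.posSemidef_sqrt.1.eigenvalues i := by rw [Real.sqrt_sq hlam]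

lemma inv_norm_le {M : Matrix (Fin d) (Fin d) ℝ} (hdet : IsUnit M.det) (c : ℝ)
    (hc : 0 < c) (h : ∀ x : EuclideanSpace ℝ (Fin d), c * ‖x‖ ^ 2 ≤ ⟪x, f M x⟫) :
    ‖M⁻¹‖ ≤ 1 / c := by
  rw [norm_f]
  refine ContinuousLinearMap.opNorm_le_bound _ (by positivity) fun x => ?_
  have hMy : f M (f M⁻¹ x) = x := by
    rw [← f_mul, Matrix.mul_nonsing_inv M hdet]
    simp only [f, _root_.map_one, ContinuousLinearMap.one_apply]
  have h1 : c * ‖f M⁻¹ x‖ ^ 2 ≤ ⟪f M⁻¹ x, x⟫ := by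
    have := h (f M⁻¹ x); rwa [hMy] at this
  have h2 : ⟪f M⁻¹ x, x⟫ ≤ ‖f M⁻¹ x‖ * ‖x‖ := real_inner_le_norm _ _
  rcases eq_or_lt_of_le (norm_nonneg (f M⁻¹ x)) with h0 | h0
  · rw [← h0]; positivity
  · rw [div_mul_eq_mul_div, one_mul, le_div_iff₀ hc]
    nlinarith

end ISPB

open ISPB in
/-- **perturbation of inverse square roots.** Let `A` and `Â` be real
symmetric positive definite `d × d` matrices with every eigenvalue of `A` at least
`σ > 0`, and suppose `‖Â − A‖₂ ≤ σ/2`. Then, writing `M^{-1/2}` for the inverse of the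
unique (symmetric) positive semidefinite square root of `M`,
`‖Â^{-1/2} − A^{-1/2}‖₂ ≤ (2/σ^{3/2})·‖Â − A‖₂`. -/
theorem inverse_sqrt_perturbation_bound
    {d : ℕ} (A Ahat : Matrix (Fin d) (Fin d) ℝ)
    (hA : A.PosDef) (hAhat : Ahat.PosDef)
    (σ : ℝ) (hσ : 0 < σ)
    (heig : ∀ i, σ ≤ hA.1.eigenvalues i)
    (hpert : l2OpNormR (Ahat - A) ≤ σ / 2) :
    l2OpNormR (hAhat.posSemidef.sqrt⁻¹ - hA.posSemidef.sqrt⁻¹)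
      ≤ (2 / σ ^ ((3 : ℝ) / 2)) * l2OpNormR (Ahat - A) := by
  classical
  rw [l2_eq, l2_eq] at *
  set Δ := Ahat - A with hΔdef
  set S := hA.posSemidef.sqrt with hSdef
  set T := hAhat.posSemidef.sqrt with hTdef
  set s := Real.sqrt σ with hsdef
  set t := Real.sqrt (σ / 2) with htdef
  have hs : 0 < s := Real.sqrt_pos.2 hσ
  have hs2 : s ^ 2 = σ := Real.sq_sqrt hσ.le
  have ht : 0 < t := Real.sqrt_pos.2 (by positivity)
  have ht2 : t ^ 2 = σ / 2 := Real.sq_sqrt (by positivity)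
  have hΔnn : (0:ℝ) ≤ ‖Δ‖ := norm_nonneg _
  -- quadratic forms
  have hqA : ∀ x : EuclideanSpace ℝ (Fin d), σ * ‖x‖ ^ 2 ≤ ⟪x, f A x⟫ :=
    quadform_lower hA.1 σ heig
  have hqAhat : ∀ x : EuclideanSpace ℝ (Fin d), (σ / 2) * ‖x‖ ^ 2 ≤ ⟪x, f Ahat x⟫ := by
    intro x
    have h1 := hqA x
    have h2 : |⟪x, f Δ x⟫| ≤ (σ / 2) * ‖x‖ ^ 2 := by
      have h3 := inner_f_le Δ x x
      nlinarith [norm_nonneg x, sq_nonneg (‖x‖)]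
    have h4 : f Ahat x = f A x + f Δ x := by
      have : A + Δ = Ahat := by rw [hΔdef]; abel
      rw [← this, f_add]
    rw [h4, inner_add_right]
    have := (abs_le.1 h2).1
    linarith
  have hqS : ∀ x : EuclideanSpace ℝ (Fin d), s * ‖x‖ ^ 2 ≤ ⟪x, f S x⟫ :=
    sqrt_quadform hA.posSemidef σ hσ.le hqA
  have hqT : ∀ x : EuclideanSpace ℝ (Fin d), t * ‖x‖ ^ 2 ≤ ⟪x, f T x⟫ :=
    sqrt_quadform hAhat.posSemidef (σ / 2) (by positivity) hqAhat
  -- determinants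
  have hdS : IsUnit S.det := by
    have h1 : S * S = A := hA.posSemidef.sqrt_mul_self
    have h2 : S.det * S.det = A.det := by rw [← Matrix.det_mul, h1]
    have hd := hA.det_pos
    exact isUnit_iff_ne_zero.2 (fun h0 => by rw [h0] at h2; nlinarith)
  have hdT : IsUnit T.det := by
    have h1 : T * T = Ahat := hAhat.posSemidef.sqrt_mul_self
    have h2 : T.det * T.det = Ahat.det := by rw [← Matrix.det_mul, h1]
    have hd := hAhat.det_pos
    exact isUnit_iff_ne_zero.2 (fun h0 => by rw [h0] at h2; nlinarith)
  have hnS : ‖S⁻¹‖ ≤ 1 / s := inv_norm_le hdS s hs hqS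
  have hnT : ‖T⁻¹‖ ≤ 1 / t := inv_norm_le hdT t ht hqT
  -- hermitian difference
  have hherm : (T - S).IsHermitian :=
    (hAhat.posSemidef.posSemidef_sqrt.1).sub (hA.posSemidef.posSemidef_sqrt.1)
  -- perturbation of square roots
  have hD : ‖T - S‖ * s ≤ ‖Δ‖ := by
    rcases Nat.eq_zero_or_pos d with hd0 | hd0
    · have h0 : T - S = 0 := by
        subst hd0; apply Matrix.ext; intro i; exact i.elim0
      rw [h0, norm_zero, zero_mul]; exact hΔnn
    · haveI : Nonempty (Fin d) := ⟨⟨0, hd0⟩⟩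
      obtain ⟨i₀, -, hmax⟩ := Finset.exists_max_image Finset.univ
        (fun i => |hherm.eigenvalues i|) ⟨Classical.arbitrary _, Finset.mem_univ _⟩
      set μ := hherm.eigenvalues i₀ with hμdef
      set v := hherm.eigenvectorBasis i₀ with hvdef
      have hv1 : ‖v‖ = 1 := hherm.eigenvectorBasis.orthonormal.1 i₀
      have hDn : ‖T - S‖ ≤ |μ| :=
        norm_le_of_eig hherm |μ| (abs_nonneg _) (fun i => hmax i (Finset.mem_univ i))
      have hΔdecomp : Δ = T * (T - S) + (T - S) * S := by
        have h1 : T * T = Ahat := hAhat.posSemidef.sqrt_mul_self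
        have h2 : S * S = A := hA.posSemidef.sqrt_mul_self
        rw [hΔdef, ← h1, ← h2, Matrix.mul_sub, Matrix.sub_mul]
        abel
      have hveig : f (T - S) v = μ • v := f_eigen hherm i₀
      have hiT : ⟪v, f Δ v⟫ = μ * (⟪v, f T v⟫ + ⟪v, f S v⟫) := by
        rw [hΔdecomp, f_add, inner_add_right, f_mul, f_mul, hveig, _root_.map_smul,
          real_inner_smul_right, ← f_sym hherm, hveig, real_inner_smul_left]
        ring
      have hTv : 0 ≤ ⟪v, f T v⟫ := le_trans (by positivity) (hqT v)
      have hSv : s ≤ ⟪v, f S v⟫ := by have := hqS v; rwa [hv1, one_pow, mul_one] at this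
      have habs : |⟪v, f Δ v⟫| ≤ ‖Δ‖ := by
        have := inner_f_le Δ v v; rwa [hv1, mul_one, mul_one] at this
      have hkey : |μ| * s ≤ |⟪v, f Δ v⟫| := by
        rw [hiT, abs_mul, abs_of_nonneg (by linarith : (0:ℝ) ≤ ⟪v, f T v⟫ + ⟪v, f S v⟫)]
        exact mul_le_mul_of_nonneg_left (by linarith) (abs_nonneg μ)
      nlinarith
  -- assembly
  have hfinal : T⁻¹ - S⁻¹ = T⁻¹ * (S - T) * S⁻¹ := by
    rw [Matrix.mul_sub, Matrix.sub_mul, Matrix.nonsing_inv_mul T hdT, Matrix.mul_assoc,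
      Matrix.mul_nonsing_inv S hdS, Matrix.mul_one, Matrix.one_mul]
  have hσ3 : σ ^ ((3:ℝ)/2) = s ^ 3 := by
    rw [hsdef, Real.sqrt_eq_rpow, ← Real.rpow_natCast (σ ^ ((1:ℝ)/2)) 3,
      ← Real.rpow_mul hσ.le]
    norm_num
  have hst : s ≤ 2 * t := by nlinarith
  have hchain : ‖T⁻¹ * (S - T) * S⁻¹‖ ≤ ‖T⁻¹‖ * ‖S - T‖ * ‖S⁻¹‖ := by
    calc ‖T⁻¹ * (S - T) * S⁻¹‖ ≤ ‖T⁻¹ * (S - T)‖ * ‖S⁻¹‖ := Matrix.l2_opNorm_mul _ _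
      _ ≤ ‖T⁻¹‖ * ‖S - T‖ * ‖S⁻¹‖ :=
        mul_le_mul_of_nonneg_right (Matrix.l2_opNorm_mul _ _) (norm_nonneg _)
  rw [hfinal, hσ3]
  have hrev : ‖S - T‖ = ‖T - S‖ := norm_sub_rev _ _
  have hTS : ‖T - S‖ ≤ ‖Δ‖ / s := (le_div_iff₀ hs).2 hD
  have hb1 : ‖T⁻¹‖ * ‖S - T‖ * ‖S⁻¹‖ ≤ (1/t) * (‖Δ‖/s) * (1/s) := by
    rw [hrev]
    have hTSnn : (0:ℝ) ≤ ‖T - S‖ := norm_nonneg _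
    have hnni : (0:ℝ) ≤ ‖S⁻¹‖ := norm_nonneg _
    have h1t : (0:ℝ) ≤ 1/t := by positivity
    exact mul_le_mul (mul_le_mul hnT hTS hTSnn h1t) hnS hnni
      (by positivity)
  have hb2 : (1/t) * (‖Δ‖/s) * (1/s) ≤ 2 / s ^ 3 * ‖Δ‖ := by
    have h1 : (1/t) * (‖Δ‖/s) * (1/s) = ‖Δ‖ / (t * s^2) := by ring
    have h2 : 2 / s ^ 3 * ‖Δ‖ = (2 * ‖Δ‖) / s ^ 3 := by ring
    rw [h1, h2, div_le_div_iff₀ (by positivity) (by positivity)]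
    nlinarith [mul_nonneg hΔnn (sq_nonneg s)]
  linarith [le_trans hchain hb1, hb2]
end
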